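/- Let (ℓ, c) be a letter realisation of a graph G over a decoder D = (Σ, A), and let a, b ∈ Σ be two distinct letters that interlace in the word w(ℓ, c). Let A₀ = ℓ⁻¹(a) and B₀ = ℓ⁻¹(b). Then a and b are independent in D if and only if the bipartite graph G[A₀, B₀] between A₀ and B₀ is homogeneous (complete bipartite or edgeless). -/

import Mathlib

open scoped Classical

/-- A letter realisation of a graph `G` over a decoder with alphabet `α` and arc
relation `D`: a letter assignment `ℓ` and an ordering `c` (a bijection onto
`Fin (Fintype.card V)`, i.e. onto `[n]`) such that distinct vertices `x, y` are
adjacent iff `(ℓ x, ℓ y) ∈ D` and `c x < c y`, or `(ℓ y, ℓ x) ∈ D` and `c y < c x`. -/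
def IsLetterRealisation {V α : Type} [Fintype V] (G : SimpleGraph V)
    (D : α → α → Prop) (ℓ : V → α) (c : V ≃ Fin (Fintype.card V)) : Prop :=
  ∀ x y : V, x ≠ y →
    (G.Adj x y ↔ (D (ℓ x) (ℓ y) ∧ c x < c y) ∨ (D (ℓ y) (ℓ x) ∧ c y < c x))

/-- Extract four vertices from an occurrence of `[p,q,r,s]` as a subword. -/
lemma extract_four {V α : Type} [Fintype V] (ℓ : V → α) (c : V ≃ Fin (Fintype.card V))
    (p q r s : α) (hs : [p, q, r, s].Sublist (List.ofFn fun i => ℓ (c.symm i))) :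
    ∃ x1 x2 x3 x4 : V, ℓ x1 = p ∧ ℓ x2 = q ∧ ℓ x3 = r ∧ ℓ x4 = s ∧
      c x1 < c x2 ∧ c x2 < c x3 ∧ c x3 < c x4 := by
  rw [List.sublist_iff_exists_fin_orderEmbedding_get_eq] at hs
  obtain ⟨f, hf⟩ := hs
  have hlen : (List.ofFn fun i => ℓ (c.symm i)).length = Fintype.card V :=
    List.length_ofFn
  set g : Fin ([p, q, r, s].length) → Fin (Fintype.card V) := fun k =>
    Fin.cast hlen (f k) with hg
  have hmono : StrictMono g := by
    intro i j hij
    simp only [hg, Fin.lt_def, Fin.coe_cast]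
    exact f.strictMono hij
  have hget : ∀ k, ℓ (c.symm (g k)) = [p, q, r, s].get k := by
    intro k
    have := hf k
    rw [List.get_ofFn] at this
    exact this.symm
  refine ⟨c.symm (g ⟨0, by norm_num⟩), c.symm (g ⟨1, by norm_num⟩),
    c.symm (g ⟨2, by norm_num⟩), c.symm (g ⟨3, by norm_num⟩),
    hget _, hget _, hget _, hget _, ?_, ?_, ?_⟩ <;>
    simp only [Equiv.apply_symm_apply] <;> exact hmono (by norm_num [Fin.lt_def])

/-- if distinct letters `a, b` interlace in `w(ℓ, c)` (i.e. `abab`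
or `baba` occurs as a subword), then `a` and `b` are independent in `D` (not
exactly one of `(a,b), (b,a)` is an arc) iff the bipartite graph between
`ℓ⁻¹(a)` and `ℓ⁻¹(b)` is homogeneous (complete bipartite or edgeless). -/
theorem stmt_11 {V α : Type} [Fintype V] [Fintype α] (G : SimpleGraph V)
    (D : α → α → Prop) (ℓ : V → α) (c : V ≃ Fin (Fintype.card V))
    (h : IsLetterRealisation G D ℓ c) (a b : α) (hab : a ≠ b)
    (hinter : [a, b, a, b].Sublist (List.ofFn fun i => ℓ (c.symm i)) ∨
      [b, a, b, a].Sublist (List.ofFn fun i => ℓ (c.symm i))) :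
    ((D a b ↔ D b a) ↔
      ((∀ u v : V, ℓ u = a → ℓ v = b → G.Adj u v) ∨
       (∀ u v : V, ℓ u = a → ℓ v = b → ¬ G.Adj u v))) := by
  have hne : ∀ u v : V, ℓ u = a → ℓ v = b → u ≠ v := by
    rintro u v hu hv rfl; exact hab (hu ▸ hv ▸ rfl)
  have hadj : ∀ u v : V, ℓ u = a → ℓ v = b →
      (G.Adj u v ↔ (D a b ∧ c u < c v) ∨ (D b a ∧ c v < c u)) := by
    intro u v hu hv
    have := h u v (hne u v hu hv)
    rw [hu, hv] at this
    exact this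
  constructor
  · intro hiff
    by_cases hD : D a b
    · left
      intro u v hu hv
      rw [hadj u v hu hv]
      rcases lt_or_gt_of_ne (fun hcc => hne u v hu hv (c.injective hcc)) with hc | hc
      · exact Or.inl ⟨hD, hc⟩
      · exact Or.inr ⟨hiff.mp hD, hc⟩
    · right
      intro u v hu hv hA
      rw [hadj u v hu hv] at hA
      rcases hA with ⟨h1, _⟩ | ⟨h1, _⟩
      · exact hD h1
      · exact hD (hiff.mpr h1)
  · intro hhom
    by_contra hiff
    -- exactly one of D a b, D b a holds
    rcases hinter with hs | hs
    · obtain ⟨x1, x2, x3, x4, h1, h2, h3, h4, c12, c23, c34⟩ :=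
        extract_four ℓ c a b a b hs
      by_cases hD : D a b
      · have hDba : ¬ D b a := fun hba => hiff ⟨fun _ => hba, fun _ => hD⟩
        have hA12 : G.Adj x1 x2 := (hadj x1 x2 h1 h2).mpr (Or.inl ⟨hD, c12⟩)
        have hA32 : ¬ G.Adj x3 x2 := by
          rw [hadj x3 x2 h3 h2]
          rintro (⟨_, hc⟩ | ⟨hba, _⟩)
          · exact absurd hc (not_lt.mpr c23.le)
          · exact hDba hba
        rcases hhom with hc | hc
        · exact hA32 (hc x3 x2 h3 h2)
        · exact hc x1 x2 h1 h2 hA12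
      · have hDba : D b a := by
          by_contra hba
          exact hiff ⟨fun h' => absurd h' hD, fun h' => absurd h' hba⟩
        have hA32 : G.Adj x3 x2 := (hadj x3 x2 h3 h2).mpr (Or.inr ⟨hDba, c23⟩)
        have hA12 : ¬ G.Adj x1 x2 := by
          rw [hadj x1 x2 h1 h2]
          rintro (⟨hD', _⟩ | ⟨_, hc⟩)
          · exact hD hD'
          · exact absurd hc (not_lt.mpr c12.le)
        rcases hhom with hc | hc
        · exact hA12 (hc x1 x2 h1 h2)
        · exact hc x3 x2 h3 h2 hA32
    · obtain ⟨x1, x2, x3, x4, h1, h2, h3, h4, c12, c23, c34⟩ :=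
        extract_four ℓ c b a b a hs
      by_cases hD : D a b
      · have hDba : ¬ D b a := fun hba => hiff ⟨fun _ => hba, fun _ => hD⟩
        have hA23 : G.Adj x2 x3 := (hadj x2 x3 h2 h3).mpr (Or.inl ⟨hD, c23⟩)
        have hA21 : ¬ G.Adj x2 x1 := by
          rw [hadj x2 x1 h2 h1]
          rintro (⟨_, hc⟩ | ⟨hba, _⟩)
          · exact absurd hc (not_lt.mpr c12.le)
          · exact hDba hba
        rcases hhom with hc | hc
        · exact hA21 (hc x2 x1 h2 h1)
        · exact hc x2 x3 h2 h3 hA23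
      · have hDba : D b a := by
          by_contra hba
          exact hiff ⟨fun h' => absurd h' hD, fun h' => absurd h' hba⟩
        have hA21 : G.Adj x2 x1 := (hadj x2 x1 h2 h1).mpr (Or.inr ⟨hDba, c12⟩)
        have hA23 : ¬ G.Adj x2 x3 := by
          rw [hadj x2 x3 h2 h3]
          rintro (⟨hD', _⟩ | ⟨_, hc⟩)
          · exact hD hD'
          · exact absurd hc (not_lt.mpr c23.le)
        rcases hhom with hc | hc
        · exact hA23 (hc x2 x3 h2 h3)
        · exact hc x2 x1 h2 h1 hA21
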